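/- Let n ≥ 1, m ≥ 1, let Ω be a real n×n orthogonal matrix whose first column equals n^{-1/2}·1ₙ, and let τ ∈ ℝⁿ. Set p = n⁻¹·Ωᵀτ. If S is a real m×n matrix with rows s₁,…,sₘ satisfying m⁻¹·Σᵢ₌₁ᵐ sᵢ₁²·sᵢᵀ = p, then the matrix M = SΩᵀ with rows r₁,…,rₘ satisfies m⁻¹·Σᵢ₌₁ᵐ (rᵢ·1ₙ)²·rᵢᵀ = τ. -/
import Mathlib


open Matrix

theorem stmt_11 (n m : ℕ) (hn : 0 < n) (hm : 0 < m)
    (Ω : Matrix (Fin n) (Fin n) ℝ)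
    (hΩ : Ωᵀ * Ω = 1)
    (hcol : ∀ i : Fin n, Ω i ⟨0, hn⟩ = (Real.sqrt n)⁻¹)
    (τ : Fin n → ℝ) (p : Fin n → ℝ) (hp : p = (n : ℝ)⁻¹ • Ωᵀ.mulVec τ)
    (S : Matrix (Fin m) (Fin n) ℝ)
    (hS : ∀ j : Fin n, (m : ℝ)⁻¹ * ∑ i, (S i ⟨0, hn⟩) ^ 2 * S i j = p j)
    (M : Matrix (Fin m) (Fin n) ℝ) (hM : M = S * Ωᵀ) :
    ∀ j : Fin n, (m : ℝ)⁻¹ * ∑ i, (∑ j', M i j') ^ 2 * M i j = τ j := by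
  intro j
  have hn' : (0:ℝ) < n := by exact_mod_cast hn
  have hsq : Real.sqrt n ≠ 0 := by positivity
  have hΩ2 : Ω * Ωᵀ = 1 := mul_eq_one_comm.mp hΩ
  set z : Fin n := ⟨0, hn⟩
  have hcolsum : ∀ k : Fin n, ∑ j', Ω j' k =
      Real.sqrt n * (1 : Matrix (Fin n) (Fin n) ℝ) z k := by
    intro k
    have h1 : (Ωᵀ * Ω) z k = (1 : Matrix (Fin n) (Fin n) ℝ) z k := by rw [hΩ]
    rw [Matrix.mul_apply] at h1
    simp only [Matrix.transpose_apply, hcol] at h1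
    rw [← Finset.mul_sum, inv_mul_eq_iff_eq_mul₀ hsq] at h1
    exact h1
  have hrow : ∀ i : Fin m, ∑ j', M i j' = Real.sqrt n * S i z := by
    intro i
    subst hM
    simp only [Matrix.mul_apply, Matrix.transpose_apply]
    rw [Finset.sum_comm]
    have : ∀ k : Fin n, ∑ j', S i k * Ω j' k
        = S i k * (Real.sqrt n * (1 : Matrix (Fin n) (Fin n) ℝ) z k) := by
      intro k; rw [← Finset.mul_sum, hcolsum k]
    rw [Finset.sum_congr rfl fun k _ => this k]
    simp [Matrix.one_apply, eq_comm, mul_comm]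
  have key : ∀ i : Fin m, (∑ j', M i j') ^ 2 * M i j
      = (n : ℝ) * ∑ k, (S i z) ^ 2 * S i k * Ω j k := by
    intro i
    rw [hrow i, mul_pow, Real.sq_sqrt (le_of_lt hn')]
    rw [Finset.mul_sum]
    have hMij : M i j = ∑ k, S i k * Ω j k := by
      rw [hM]; simp [Matrix.mul_apply]
    rw [hMij, Finset.mul_sum]
    exact Finset.sum_congr rfl fun k _ => by ring
  calc (m : ℝ)⁻¹ * ∑ i, (∑ j', M i j') ^ 2 * M i j
      = (n : ℝ) * ∑ k, Ω j k * ((m : ℝ)⁻¹ * ∑ i, (S i z) ^ 2 * S i k) := by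
        rw [Finset.sum_congr rfl fun i _ => key i]
        rw [← Finset.mul_sum, Finset.sum_comm]
        rw [Finset.mul_sum, Finset.mul_sum, Finset.mul_sum]
        refine Finset.sum_congr rfl fun k _ => ?_
        rw [← Finset.sum_mul]
        ring
    _ = (n : ℝ) * ∑ k, Ω j k * p k := by
        exact congrArg _ (Finset.sum_congr rfl fun k _ => by rw [hS k])
    _ = τ j := by
        subst hp
        have h2 : Ω.mulVec (Ωᵀ.mulVec τ) = τ := by
          rw [Matrix.mulVec_mulVec, hΩ2, Matrix.one_mulVec]
        have h3 : ∑ k, Ω j k * ((n:ℝ)⁻¹ • Ωᵀ.mulVec τ) k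
            = (n:ℝ)⁻¹ * Ω.mulVec (Ωᵀ.mulVec τ) j := by
          simp [Matrix.mulVec, dotProduct, Finset.mul_sum]
          exact Finset.sum_congr rfl fun k _ =>
            Finset.sum_congr rfl fun x _ => by ring
        rw [h3, h2]
        field_simp
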